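/- Cauchy version of Flett's theorem: Let a < b and let f, g : ℝ → ℝ be differentiable at every point of the closed interval [a, b], with g'(x) ≠ 0 for all x ∈ [a, b] and f'(a)/g'(a) = f'(b)/g'(b). Then there exists ξ ∈ (a, b) such that (f(ξ) - f(a)) / (g(ξ) - g(a)) = f'(ξ) / g'(ξ). -/

import Mathlib

open Set Filter Topology

private lemma flett_aux1 (F D : ℝ → ℝ) (a b Db : ℝ) (hab : a < b)
    (hFc : ContinuousOn F (Set.Icc a b))
    (hFd : ∀ x ∈ Set.Ioo a b, HasDerivAt F (D x) x)
    (hDb : HasDerivWithinAt F Db (Set.Icc a b) b)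
    (hlt : F a < F b) (hDb_neg : Db < 0) :
    ∃ ξ ∈ Set.Ioo a b, D ξ = 0 := by
  have hslope : Tendsto (slope F b) (𝓝[Set.Icc a b \ {b}] b) (𝓝 Db) :=
    hasDerivWithinAt_iff_tendsto_slope.mp hDb
  rw [Set.Icc_sdiff_right] at hslope
  have hne : (𝓝[Set.Ico a b] b).NeBot := by
    rw [nhdsWithin_Ico_eq_nhdsLT hab]; infer_instance
  obtain ⟨c, hcs, hcm⟩ :=
    ((hslope.eventually_lt_const hDb_neg).and eventually_mem_nhdsWithin).exists
  have hcb : c < b := hcm.2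
  have hFcb : F b < F c := by
    rw [slope_def_field] at hcs
    rcases div_neg_iff.mp hcs with ⟨h1, h2⟩ | ⟨h1, h2⟩
    · linarith
    · linarith
  have hac : a < c := by
    rcases hcm.1.eq_or_lt with rfl | h
    · exact absurd hFcb (by linarith)
    · exact h
  have hFbmem : F b ∈ Set.Ioo (F a) (F c) := ⟨hlt, hFcb⟩
  obtain ⟨d, hd, hdeq⟩ :=
    intermediate_value_Ioo hac.le (hFc.mono (Set.Icc_subset_Icc_right hcb.le)) hFbmem
  obtain ⟨ξ, hξ, h0⟩ := exists_hasDerivAt_eq_zero (hd.2.trans hcb)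
    (hFc.mono (Set.Icc_subset_Icc_left hd.1.le)) hdeq
    (fun x hx => hFd x ⟨hd.1.trans hx.1, hx.2⟩)
  exact ⟨ξ, ⟨hd.1.trans hξ.1, hξ.2⟩, h0⟩

private lemma flett_aux2 (F D : ℝ → ℝ) (a b Db : ℝ) (hab : a < b)
    (hFc : ContinuousOn F (Set.Icc a b))
    (hFd : ∀ x ∈ Set.Ioo a b, HasDerivAt F (D x) x)
    (hDb : HasDerivWithinAt F Db (Set.Icc a b) b)
    (h1 : F a < F b → Db < 0) (h2 : F b < F a → 0 < Db) :
    ∃ ξ ∈ Set.Ioo a b, D ξ = 0 := by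
  rcases lt_trichotomy (F a) (F b) with h | h | h
  · exact flett_aux1 F D a b Db hab hFc hFd hDb h (h1 h)
  · exact exists_hasDerivAt_eq_zero hab hFc h hFd
  · obtain ⟨ξ, hξ, h0⟩ := flett_aux1 (-F) (-D) a b (-Db) hab hFc.neg
      (fun x hx => (hFd x hx).neg) hDb.neg (by simpa using h) (by simpa using h2 h)
    exact ⟨ξ, hξ, by simpa using h0⟩

/-- Cauchy version of Flett's theorem. -/
theorem flett_cauchy (f f' g g' : ℝ → ℝ) (a b : ℝ) (hab : a < b)
    (hf : ∀ x ∈ Set.Icc a b, HasDerivWithinAt f (f' x) (Set.Icc a b) x)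
    (hg : ∀ x ∈ Set.Icc a b, HasDerivWithinAt g (g' x) (Set.Icc a b) x)
    (hg' : ∀ x ∈ Set.Icc a b, g' x ≠ 0)
    (hend : f' a / g' a = f' b / g' b) :
    ∃ ξ ∈ Set.Ioo a b, (f ξ - f a) / (g ξ - g a) = f' ξ / g' ξ := by
  have haI : a ∈ Set.Icc a b := Set.left_mem_Icc.mpr hab.le
  have hbI : b ∈ Set.Icc a b := Set.right_mem_Icc.mpr hab.le
  have hfc : ContinuousOn f (Set.Icc a b) := fun x hx => (hf x hx).continuousWithinAt
  have hgc : ContinuousOn g (Set.Icc a b) := fun x hx => (hg x hx).continuousWithinAt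
  have hfd : ∀ x ∈ Set.Ioo a b, HasDerivAt f (f' x) x := fun x hx =>
    (hf x (Set.Ioo_subset_Icc_self hx)).hasDerivAt (Icc_mem_nhds hx.1 hx.2)
  have hgd : ∀ x ∈ Set.Ioo a b, HasDerivAt g (g' x) x := fun x hx =>
    (hg x (Set.Ioo_subset_Icc_self hx)).hasDerivAt (Icc_mem_nhds hx.1 hx.2)
  have hgne : ∀ x ∈ Set.Ioc a b, g x ≠ g a := by
    rintro x ⟨hax, hxb⟩ heq
    obtain ⟨c, hc, hc0⟩ := exists_hasDerivAt_eq_zero hax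
      (hgc.mono (Set.Icc_subset_Icc_right hxb)) heq.symm
      (fun y hy => hgd y ⟨hy.1, hy.2.trans_le hxb⟩)
    exact hg' c ⟨hc.1.le, hc.2.le.trans hxb⟩ hc0
  have hgba : g b - g a ≠ 0 := sub_ne_zero.mpr (hgne b ⟨hab, le_refl b⟩)
  set lam := f' a / g' a with hlam
  set F : ℝ → ℝ := fun x => if x = a then lam else (f x - f a) / (g x - g a) with hFdef
  set D : ℝ → ℝ :=
    fun x => (f' x * (g x - g a) - (f x - f a) * g' x) / (g x - g a) ^ 2 with hDdef
  have hFa : F a = lam := by simp [hFdef]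
  have hFx : ∀ x, x ≠ a → F x = (f x - f a) / (g x - g a) := by
    intro x hx; simp [hFdef, hx]
  -- continuity of F on [a, b]
  have hFc : ContinuousOn F (Set.Icc a b) := by
    intro x hx
    by_cases hxa : x = a
    · subst hxa
      rw [← continuousWithinAt_diff_self]
      have h1 : Tendsto (slope f x) (𝓝[Set.Icc x b \ {x}] x) (𝓝 (f' x)) :=
        hasDerivWithinAt_iff_tendsto_slope.mp (hf x hx)
      have h2 : Tendsto (slope g x) (𝓝[Set.Icc x b \ {x}] x) (𝓝 (g' x)) :=
        hasDerivWithinAt_iff_tendsto_slope.mp (hg x hx)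
      have h3 := h1.div h2 (hg' x hx)
      have heq : (fun y => slope f x y / slope g x y) =ᶠ[𝓝[Set.Icc x b \ {x}] x] F := by
        filter_upwards [self_mem_nhdsWithin] with y hy
        have hya : y - x ≠ 0 := sub_ne_zero.mpr hy.2
        rw [hFx y hy.2, slope_def_field, slope_def_field, div_div_div_cancel_right₀ hya]
      have : ContinuousWithinAt F (Set.Icc x b \ {x}) x := by
        unfold ContinuousWithinAt
        rw [hFa, hlam]
        exact h3.congr' heq
      exact this
    · have hax : a < x := lt_of_le_of_ne hx.1 (Ne.symm hxa)
      have hGc : ContinuousWithinAt (fun y => (f y - f a) / (g y - g a)) (Set.Icc a b) x :=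
        ((hfc x hx).sub continuousWithinAt_const).div
          ((hgc x hx).sub continuousWithinAt_const)
          (sub_ne_zero.mpr (hgne x ⟨hax, hx.2⟩))
      refine hGc.congr_of_eventuallyEq ?_ (hFx x hxa)
      filter_upwards [mem_nhdsWithin_of_mem_nhds (Ioi_mem_nhds hax)] with y hy
      exact hFx y (ne_of_gt hy)
  -- derivative of F on (a, b)
  have hFd : ∀ x ∈ Set.Ioo a b, HasDerivAt F (D x) x := by
    intro x hx
    have hgx : g x - g a ≠ 0 := sub_ne_zero.mpr (hgne x ⟨hx.1, hx.2.le⟩)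
    have hG : HasDerivAt (fun y => (f y - f a) / (g y - g a)) (D x) x :=
      ((hfd x hx).sub_const (f a)).div ((hgd x hx).sub_const (g a)) hgx
    refine hG.congr_of_eventuallyEq ?_
    filter_upwards [Ioi_mem_nhds hx.1] with y hy
    exact hFx y (ne_of_gt hy)
  -- one-sided derivative of F at b
  set Db := (f' b * (g b - g a) - (f b - f a) * g' b) / (g b - g a) ^ 2 with hDbdef
  have hDb : HasDerivWithinAt F Db (Set.Icc a b) b := by
    have hG : HasDerivWithinAt (fun y => (f y - f a) / (g y - g a)) Db (Set.Icc a b) b :=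
      ((hf b hbI).sub_const (f a)).div ((hg b hbI).sub_const (g a)) hgba
    refine hG.congr_of_eventuallyEq ?_ (hFx b (ne_of_gt hab))
    filter_upwards [mem_nhdsWithin_of_mem_nhds (Ioi_mem_nhds hab)] with y hy
    exact hFx y (ne_of_gt hy)
  -- sign of g' b * (g b - g a)
  have hK : 0 < g' b * (g b - g a) := by
    by_contra hKn
    push_neg at hKn
    have hKlt : g' b * (g b - g a) < 0 :=
      lt_of_le_of_ne hKn (mul_ne_zero (hg' b hbI) hgba)
    obtain ⟨c, hc, hceq⟩ := exists_hasDerivAt_eq_slope g g' hab hgc hgd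
    have hXX : 0 < (g b - g a) * (g b - g a) := mul_self_pos.mpr hgba
    have hgc_sign : 0 < g' c * (g b - g a) := by
      rw [hceq, div_mul_eq_mul_div]
      exact div_pos hXX (sub_pos.mpr hab)
    have hder : ∀ x ∈ Set.Icc c b, HasDerivWithinAt g (g' x) (Set.Icc c b) x :=
      fun x hx => (hg x ⟨hc.1.le.trans hx.1, hx.2.trans hbI.2⟩).mono
        (Set.Icc_subset_Icc hc.1.le le_rfl)
    rcases lt_or_gt_of_ne hgba with hX | hX
    · -- g b - g a < 0 : so g' b > 0 and g' c < 0
      have hb_pos : 0 < g' b := by nlinarith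
      have hc_neg : g' c < 0 := by nlinarith
      obtain ⟨y, hy, hy0⟩ := exists_hasDerivWithinAt_eq_of_gt_of_lt hc.2.le hder hc_neg hb_pos
      exact hg' y ⟨hc.1.le.trans hy.1.le, hy.2.le⟩ hy0
    · have hb_neg : g' b < 0 := by nlinarith
      have hc_pos : 0 < g' c := by nlinarith
      obtain ⟨y, hy, hy0⟩ := exists_hasDerivWithinAt_eq_of_lt_of_gt hc.2.le hder hc_pos hb_neg
      exact hg' y ⟨hc.1.le.trans hy.1.le, hy.2.le⟩ hy0
  -- key algebraic facts
  have hfb : f' b = lam * g' b := by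
    rw [hend, div_mul_cancel₀ _ (hg' b hbI)]
  have hfab : f b - f a = F b * (g b - g a) := by
    rw [hFx b (ne_of_gt hab), div_mul_cancel₀ _ hgba]
  have hX2 : 0 < (g b - g a) ^ 2 := by positivity
  have h1 : F a < F b → Db < 0 := by
    intro h
    rw [hFa] at h
    rw [hDbdef, hfb, hfab]
    apply div_neg_of_neg_of_pos _ hX2
    nlinarith [mul_pos hK (sub_pos.mpr h)]
  have h2 : F b < F a → 0 < Db := by
    intro h
    rw [hFa] at h
    rw [hDbdef, hfb, hfab]
    apply div_pos _ hX2
    nlinarith [mul_pos hK (sub_pos.mpr h)]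
  obtain ⟨ξ, hξ, h0⟩ := flett_aux2 F D a b Db hab hFc hFd hDb h1 h2
  refine ⟨ξ, hξ, ?_⟩
  have hXξ : g ξ - g a ≠ 0 := sub_ne_zero.mpr (hgne ξ ⟨hξ.1, hξ.2.le⟩)
  have hnum : f' ξ * (g ξ - g a) - (f ξ - f a) * g' ξ = 0 := by
    have h0' : (f' ξ * (g ξ - g a) - (f ξ - f a) * g' ξ) / (g ξ - g a) ^ 2 = 0 := h0
    exact (div_eq_zero_iff.mp h0').resolve_right (pow_ne_zero 2 hXξ)
  rw [div_eq_div_iff hXξ (hg' ξ ⟨hξ.1.le, hξ.2.le⟩)]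
  linarith [hnum]
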